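/- Let q ∈ (1/2,1), K ≥ 1, 1 ≤ C ≤ K/2, λ ∈ (0,1]. If the majority-rule inflow accuracy function φ^λ has a fixed point x' ∈ [0,1] with λ'x'+(1-λ')q < 1/2 at some virality weight λ' ∈ [0, λ), then φ at virality weight λ has a fixed point x'' ∈ (0, 1/2) with λx''+(1-λ)q < 1/2. -/

import Mathlib

open Finset

noncomputable def binPMF (J k : ℕ) (p : ℝ) : ℝ :=
  (J.choose k : ℝ) * p ^ k * (1 - p) ^ (J - k)

/-- Majority-rule inflow accuracy with virality weight `l`, for general parity of `K`. -/
noncomputable def inflowMaj (q : ℝ) (K C : ℕ) (l x : ℝ) : ℝ :=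
  (q + (C : ℝ) * ((∑ k ∈ Finset.Icc (K/2 + 1) K, binPMF K k (l * x + (1 - l) * q)) +
    (if Even K then q * binPMF K (K/2) (l * x + (1 - l) * q) else 0))) / (1 + (C : ℝ))

lemma binPMF_nonneg {J k : ℕ} {p : ℝ} (h0 : 0 ≤ p) (h1 : p ≤ 1) : 0 ≤ binPMF J k p := by
  unfold binPMF
  have h2 : (0:ℝ) ≤ 1 - p := by linarith
  positivity

lemma inflowMaj_cont (q : ℝ) (K C : ℕ) (lam : ℝ) :
    Continuous (fun t : ℝ => inflowMaj q K C lam t) := by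
  unfold inflowMaj binPMF
  apply Continuous.div_const
  apply continuous_const.add
  apply Continuous.mul continuous_const
  apply Continuous.add
  · exact continuous_finset_sum _ (fun k _ => by fun_prop)
  · split_ifs
    · fun_prop
    · exact continuous_const

theorem stmt18 (q lam lam' x' : ℝ) (K C : ℕ)
    (hq : q ∈ Set.Ioo (1/2 : ℝ) 1) (hlam : lam ∈ Set.Ioc (0:ℝ) 1)
    (hK : 1 ≤ K) (hC : 1 ≤ C) (hCK : 2 * C ≤ K)
    (hlam' : lam' ∈ Set.Ico (0:ℝ) lam)
    (hx' : x' ∈ Set.Icc (0:ℝ) 1)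
    (hmis : lam' * x' + (1 - lam') * q < 1/2)
    (hfix : inflowMaj q K C lam' x' = x') :
    ∃ x'' ∈ Set.Ioo (0:ℝ) (1/2),
      inflowMaj q K C lam x'' = x'' ∧ lam * x'' + (1 - lam) * q < 1/2 := by
  obtain ⟨hq1, hq2⟩ := hq
  obtain ⟨hlam0, hlam1⟩ := hlam
  obtain ⟨hlam'0, hlam'lt⟩ := hlam'
  obtain ⟨hx'0, hx'1⟩ := hx'
  have hlamne : lam ≠ 0 := ne_of_gt hlam0
  set x : ℝ := ((lam' * x' + (1 - lam') * q) - (1 - lam) * q) / lam with hxdef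
  have hpx : lam * x + (1 - lam) * q = lam' * x' + (1 - lam') * q := by
    rw [hxdef]; field_simp; ring
  -- x' < q
  have hx'q : x' < q := by nlinarith [mul_nonneg hlam'0 (sub_nonneg.mpr (le_of_lt hmis))]
  -- x' < x
  have hx'x : x' < x := by
    rw [hxdef, lt_div_iff₀ hlam0]
    nlinarith [mul_pos (sub_pos.mpr hlam'lt) (sub_pos.mpr hx'q)]
  have hx0 : 0 < x := lt_of_le_of_lt hx'0 hx'x
  have hxhalf : x < 1/2 := by
    rw [hxdef, div_lt_iff₀ hlam0]
    nlinarith [mul_nonneg (by linarith : (0:ℝ) ≤ 1 - lam) (by linarith : (0:ℝ) ≤ q - 1/2)]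
  -- inflowMaj at x equals x'
  have hfixx : inflowMaj q K C lam x = x' := by
    have : inflowMaj q K C lam x = inflowMaj q K C lam' x' := by
      unfold inflowMaj; rw [hpx]
    rw [this, hfix]
  -- positivity at 0
  have hp0 : (0:ℝ) ≤ lam * 0 + (1 - lam) * q := by nlinarith
  have hp1 : lam * 0 + (1 - lam) * q ≤ 1 := by nlinarith
  have hS : 0 ≤ (∑ k ∈ Finset.Icc (K/2 + 1) K, binPMF K k (lam * 0 + (1 - lam) * q)) +
      (if Even K then q * binPMF K (K/2) (lam * 0 + (1 - lam) * q) else 0) := by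
    apply add_nonneg
    · exact Finset.sum_nonneg fun k _ => binPMF_nonneg hp0 hp1
    · split_ifs
      · exact mul_nonneg (by linarith) (binPMF_nonneg hp0 hp1)
      · exact le_rfl
  have hpos0 : 0 < inflowMaj q K C lam 0 := by
    unfold inflowMaj
    apply div_pos
    · have : 0 ≤ (C:ℝ) := Nat.cast_nonneg C
      nlinarith
    · positivity
  -- IVT on g t = inflowMaj - t
  have hcont : Continuous (fun t : ℝ => inflowMaj q K C lam t - t) :=
    (inflowMaj_cont q K C lam).sub continuous_id
  have hmem : (0:ℝ) ∈ Set.Ioo (inflowMaj q K C lam x - x) (inflowMaj q K C lam 0 - 0) := by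
    constructor
    · rw [hfixx]; linarith
    · simpa using hpos0
  obtain ⟨x'', hx''mem, hg⟩ :=
    intermediate_value_Ioo' (le_of_lt hx0) hcont.continuousOn hmem
  refine ⟨x'', ⟨hx''mem.1, lt_trans hx''mem.2 hxhalf⟩, ?_, ?_⟩
  · have := hg; dsimp at this; linarith [this]
  · have hlt : lam * x'' < lam * x := by
      exact mul_lt_mul_of_pos_left hx''mem.2 hlam0
    nlinarith
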